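/- Let 0 ≤ r₀ < r < 1, |α| ≤ r₀, k = (r + r₀)/(r − r₀), and let g be a continuous function on the circle |z| = r with values in ℂ. Define m(r, g) = (1/2π)∫₀^{2π} log⁺|g(re^{iθ})| dθ and let ψ_α(z) = r²(z − α)/(r² − ᾱz). Then (1/k)·m(r, g) ≤ m(r, g ∘ ψ_α) ≤ k·m(r, g). -/

import Mathlib

noncomputable def logPlus (x : ℝ) : ℝ := max (Real.log x) 0

noncomputable def psiMap (r : ℝ) (α : ℂ) (z : ℂ) : ℂ :=
  (r : ℂ) ^ 2 * (z - α) / ((r : ℂ) ^ 2 - (starRingEnd ℂ) α * z)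

/-- The proximity integral of `g` over the circle of radius `r`. -/
noncomputable def proxm (r : ℝ) (g : ℂ → ℂ) : ℝ :=
  (1 / (2 * Real.pi)) *
    ∫ θ in (0:ℝ)..(2 * Real.pi),
      logPlus ‖g ((r : ℂ) * Complex.exp ((θ : ℂ) * Complex.I))‖

namespace ProxAux

/-- real part of `r - conj α * exp (θ i)` -/
noncomputable def uF (r : ℝ) (α : ℂ) (θ : ℝ) : ℝ :=
  r - (α.re * Real.cos θ + α.im * Real.sin θ)

/-- imaginary part of `r - conj α * exp (θ i)` -/
noncomputable def vF (α : ℂ) (θ : ℝ) : ℝ := α.im * Real.cos θ - α.re * Real.sin θ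

/-- the boundary correspondence function -/
noncomputable def hF (r : ℝ) (α : ℂ) (θ : ℝ) : ℝ :=
  θ - 2 * Real.arctan (vF α θ / uF r α θ)

/-- its derivative (the Poisson-type kernel) -/
noncomputable def hD (r : ℝ) (α : ℂ) (θ : ℝ) : ℝ :=
  (r ^ 2 - (α.re ^ 2 + α.im ^ 2)) / (uF r α θ ^ 2 + vF α θ ^ 2)

lemma sq_bound (α : ℂ) (θ : ℝ) :
    (α.re * Real.cos θ + α.im * Real.sin θ) ^ 2 + vF α θ ^ 2 = α.re ^ 2 + α.im ^ 2 := by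
  unfold vF
  linear_combination (α.re ^ 2 + α.im ^ 2) * Real.sin_sq_add_cos_sq θ

lemma abs_sq (α : ℂ) : α.re ^ 2 + α.im ^ 2 = ‖α‖ ^ 2 := by
  rw [Complex.sq_norm, Complex.normSq_apply]; ring

lemma uF_pos {r : ℝ} {α : ℂ} (hA : ‖α‖ < r) (θ : ℝ) : 0 < uF r α θ := by
  have h1 := sq_bound α θ
  have h2 := abs_sq α
  have h3 : 0 ≤ ‖α‖ := norm_nonneg α
  have h4 := sq_nonneg (vF α θ)
  unfold uF
  nlinarith [sq_nonneg (α.re * Real.cos θ + α.im * Real.sin θ - ‖α‖),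
    sq_nonneg (α.re * Real.cos θ + α.im * Real.sin θ + ‖α‖)]

lemma den_pos {r : ℝ} {α : ℂ} (hA : ‖α‖ < r) (θ : ℝ) :
    0 < uF r α θ ^ 2 + vF α θ ^ 2 := by
  have := uF_pos hA θ
  positivity

lemma hF_hasDeriv {r : ℝ} {α : ℂ} (hA : ‖α‖ < r) (θ : ℝ) :
    HasDerivAt (hF r α) (hD r α θ) θ := by
  have hc := Real.hasDerivAt_cos θ
  have hs := Real.hasDerivAt_sin θ
  have hu0 : uF r α θ ≠ 0 := (uF_pos hA θ).ne'
  have hu : HasDerivAt (uF r α) (-vF α θ) θ := by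
    have h := ((hc.const_mul α.re).add (hs.const_mul α.im)).const_sub r
    exact h.congr_deriv (by unfold vF; ring)
  have hv : HasDerivAt (vF α) (uF r α θ - r) θ := by
    have h := (hc.const_mul α.im).sub (hs.const_mul α.re)
    exact h.congr_deriv (by unfold uF; ring)
  have hq := hv.div hu hu0
  have harc := hq.arctan
  have key := (hasDerivAt_id θ).sub (harc.const_mul 2)
  refine key.congr_deriv ?_
  have hD0 : uF r α θ ^ 2 + vF α θ ^ 2 ≠ 0 := (den_pos hA θ).ne'
  have hnum : r ^ 2 - (α.re ^ 2 + α.im ^ 2)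
      = 2 * r * uF r α θ - uF r α θ ^ 2 - vF α θ ^ 2 := by
    have h1 := sq_bound α θ
    unfold uF at *
    nlinarith [h1]
  rw [hD, hnum, Pi.div_apply]
  field_simp
  ring

lemma hF_two_pi {r : ℝ} {α : ℂ} : hF r α (2 * Real.pi) = hF r α 0 + 2 * Real.pi := by
  unfold hF uF vF
  rw [Real.cos_two_pi, Real.sin_two_pi, Real.cos_zero, Real.sin_zero]
  ring

lemma psi_eq {r : ℝ} {α : ℂ} (hr : 0 < r) (hA : ‖α‖ < r) (θ : ℝ) :
    psiMap r α ((r : ℂ) * Complex.exp ((θ : ℂ) * Complex.I))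
      = (r : ℂ) * Complex.exp (((hF r α θ : ℝ) : ℂ) * Complex.I) := by
  set U := uF r α θ with hU
  set V := vF α θ with hV
  set t := Real.arctan (V / U) with ht
  have hUpos : 0 < U := uF_pos hA θ
  have hDpos : 0 < U ^ 2 + V ^ 2 := den_pos hA θ
  set e := Complex.exp ((θ : ℂ) * Complex.I) with he
  have hene : e ≠ 0 := Complex.exp_ne_zero _
  have hdne : ((U : ℂ) + V * Complex.I) ≠ 0 := by
    intro h
    have := congrArg Complex.re h
    simp at this
    exact hUpos.ne' this
  have hdne2 : ((U : ℂ) - V * Complex.I) ≠ 0 := by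
    intro h
    have := congrArg Complex.re h
    simp at this
    exact hUpos.ne' this
  have hd : ((U : ℂ) + V * Complex.I) = (r : ℂ) - (starRingEnd ℂ) α * e := by
    apply Complex.ext
    · simp [he, Complex.exp_ofReal_mul_I_re, Complex.exp_ofReal_mul_I_im, Complex.mul_re,
        Complex.cos_ofReal_re, Complex.sin_ofReal_re, hU, uF]
    · simp [he, Complex.exp_ofReal_mul_I_re, Complex.exp_ofReal_mul_I_im, Complex.mul_im,
        Complex.cos_ofReal_re, Complex.sin_ofReal_re, hV, vF]
      ring
  -- square root facts
  set S := Real.sqrt (U ^ 2 + V ^ 2) with hS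
  have hSpos : 0 < S := Real.sqrt_pos.mpr hDpos
  have hS2 : S ^ 2 = U ^ 2 + V ^ 2 := Real.sq_sqrt hDpos.le
  have hsq : Real.sqrt (1 + (V / U) ^ 2) = S / U := by
    rw [show 1 + (V / U) ^ 2 = (U ^ 2 + V ^ 2) / U ^ 2 by field_simp]
    rw [Real.sqrt_div hDpos.le, Real.sqrt_sq hUpos.le]
  have hcos : Real.cos t = U / S := by
    rw [ht, Real.cos_arctan, hsq]
    rw [one_div_div]
  have hsin : Real.sin t = V / S := by
    rw [ht, Real.sin_arctan, hsq]
    field_simp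
  -- trig of -2t
  have hc2 : Real.cos (-(2 * t)) = (U ^ 2 - V ^ 2) / (U ^ 2 + V ^ 2) := by
    rw [Real.cos_neg, Real.cos_two_mul, hcos, div_pow, hS2]
    field_simp
    ring
  have hs2 : Real.sin (-(2 * t)) = -(2 * U * V) / (U ^ 2 + V ^ 2) := by
    rw [Real.sin_neg, Real.sin_two_mul, hsin, hcos, ← hS2]
    field_simp
  have h2 : Complex.exp (((-(2 * t) : ℝ) : ℂ) * Complex.I)
      = ((U : ℂ) - V * Complex.I) / ((U : ℂ) + V * Complex.I) := by
    have hDC : ((U : ℂ) ^ 2 + (V : ℂ) ^ 2) ≠ 0 := by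
      exact_mod_cast hDpos.ne'
    rw [Complex.exp_mul_I, ← Complex.ofReal_cos, ← Complex.ofReal_sin, hc2, hs2]
    push_cast
    field_simp
    ring_nf
    simp only [Complex.I_sq]
    ring
  have hexp2 : Complex.exp (((hF r α θ : ℝ) : ℂ) * Complex.I)
      = e * ((U : ℂ) - V * Complex.I) / ((U : ℂ) + V * Complex.I) := by
    have hsplit : ((hF r α θ : ℝ) : ℂ) * Complex.I
        = (θ : ℂ) * Complex.I + ((-(2 * t) : ℝ) : ℂ) * Complex.I := by
      unfold hF
      rw [← hU, ← hV, ← ht]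
      push_cast
      ring
    rw [hsplit, Complex.exp_add, ← he, h2]
    ring
  -- relation between α and U, V
  have h3 : (starRingEnd ℂ) α * e = (r : ℂ) - ((U : ℂ) + V * Complex.I) := by
    rw [hd]; ring
  have h4 : α * (starRingEnd ℂ) e = (r : ℂ) - ((U : ℂ) - V * Complex.I) := by
    have h5 := congrArg (starRingEnd ℂ) h3
    simp only [map_mul, map_sub, map_add, RingHomCompTriple.comp_apply, Complex.conj_conj,
      Complex.conj_ofReal, Complex.conj_I, RingHom.id_apply] at h5
    linear_combination h5
  have hce : (starRingEnd ℂ) e * e = 1 := by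
    have hconj : (starRingEnd ℂ) e = Complex.exp (-((θ : ℂ) * Complex.I)) := by
      rw [he, ← Complex.exp_conj]
      congr 1
      simp [Complex.conj_ofReal, Complex.conj_I]
    rw [hconj, ← Complex.exp_add]
    simp
  have hα2 : α = ((r : ℂ) - (U : ℂ) + V * Complex.I) * e := by
    calc α = α * ((starRingEnd ℂ) e * e) := by rw [hce, mul_one]
    _ = α * (starRingEnd ℂ) e * e := by ring
    _ = ((r : ℂ) - ((U : ℂ) - V * Complex.I)) * e := by rw [h4]
    _ = _ := by ring
  have hden : (r : ℂ) ^ 2 - (starRingEnd ℂ) α * ((r : ℂ) * e) = (r : ℂ) * ((U : ℂ) + V * Complex.I) := by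
    linear_combination -(r : ℂ) * h3
  have hrne : (r : ℂ) ≠ 0 := by
    exact_mod_cast hr.ne'
  rw [psiMap, hexp2, hden, hα2]
  field_simp
  ring

noncomputable def FF (r : ℝ) (g : ℂ → ℂ) (φ : ℝ) : ℝ :=
  logPlus ‖g ((r : ℂ) * Complex.exp ((φ : ℂ) * Complex.I))‖

lemma logPlus_of_nonneg {x : ℝ} (hx : 0 ≤ x) : logPlus x = Real.log (max x 1) := by
  rcases le_or_gt x 1 with h | h
  · rw [max_eq_right h, Real.log_one, logPlus, max_eq_right (Real.log_nonpos hx h)]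
  · rw [max_eq_left h.le, logPlus, max_eq_left (Real.log_nonneg h.le)]

lemma FF_nonneg (r : ℝ) (g : ℂ → ℂ) (φ : ℝ) : 0 ≤ FF r g φ := le_max_right _ _

lemma circle_mem {r : ℝ} (hr : 0 < r) (φ : ℝ) :
    (r : ℂ) * Complex.exp ((φ : ℂ) * Complex.I) ∈ Metric.sphere (0 : ℂ) r := by
  simp [Metric.mem_sphere, dist_zero_right, map_mul,
    Complex.norm_exp_ofReal_mul_I, abs_of_pos hr]

lemma FF_continuous {r : ℝ} {g : ℂ → ℂ} (hr : 0 < r)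
    (hg : ContinuousOn g (Metric.sphere (0 : ℂ) r)) : Continuous (FF r g) := by
  have hmap : Continuous fun φ : ℝ => (r : ℂ) * Complex.exp ((φ : ℂ) * Complex.I) :=
    continuous_const.mul (Complex.continuous_exp.comp
      (Complex.continuous_ofReal.mul continuous_const))
  have hgc : Continuous fun φ : ℝ => g ((r : ℂ) * Complex.exp ((φ : ℂ) * Complex.I)) :=
    hg.comp_continuous hmap (circle_mem hr)
  have heq : FF r g = fun φ : ℝ =>
      Real.log (max ‖g ((r : ℂ) * Complex.exp ((φ : ℂ) * Complex.I))‖ 1) :=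
    funext fun φ => logPlus_of_nonneg (norm_nonneg _)
  rw [heq]
  refine Real.continuousOn_log.comp_continuous
    ((continuous_norm.comp hgc).max continuous_const) (fun φ => ?_)
  simp only [Set.mem_compl_iff, Set.mem_singleton_iff]
  exact ne_of_gt (lt_of_lt_of_le one_pos (le_max_right _ _))

lemma FF_periodic (r : ℝ) (g : ℂ → ℂ) : Function.Periodic (FF r g) (2 * Real.pi) := by
  intro φ
  unfold FF
  have hsplit : ((φ + 2 * Real.pi : ℝ) : ℂ) * Complex.I
      = (φ : ℂ) * Complex.I + 2 * (Real.pi : ℂ) * Complex.I := by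
    push_cast
    ring
  rw [hsplit, Complex.exp_add, Complex.exp_two_pi_mul_I, mul_one]

lemma hD_cont {r : ℝ} {α : ℂ} (hA : ‖α‖ < r) : Continuous (hD r α) := by
  have hden : Continuous fun θ => uF r α θ ^ 2 + vF α θ ^ 2 := by
    unfold uF vF
    fun_prop
  exact continuous_const.div hden fun θ => (den_pos hA θ).ne'

end ProxAux

open ProxAux

theorem proxm_comp_psiMap_bounds (r₀ r : ℝ) (h0 : 0 ≤ r₀) (h1 : r₀ < r) (h2 : r < 1)
    (α : ℂ) (hα : ‖α‖ ≤ r₀) (g : ℂ → ℂ)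
    (hg : ContinuousOn g (Metric.sphere (0 : ℂ) r)) :
    (1 / ((r + r₀) / (r - r₀))) * proxm r g ≤ proxm r (g ∘ psiMap r α) ∧
      proxm r (g ∘ psiMap r α) ≤ ((r + r₀) / (r - r₀)) * proxm r g := by
  have hr : 0 < r := lt_of_le_of_lt h0 h1
  have hA : ‖α‖ < r := lt_of_le_of_lt hα h1
  have hrr : 0 < r - r₀ := sub_pos.mpr h1
  have hrr2 : 0 < r + r₀ := by linarith
  set k := (r + r₀) / (r - r₀) with hk
  have hkpos : 0 < k := div_pos hrr2 hrr
  have hπ : 0 < 2 * Real.pi := by positivity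
  have hs_le : α.re ^ 2 + α.im ^ 2 ≤ r₀ ^ 2 := by
    rw [abs_sq]
    nlinarith [norm_nonneg α]
  -- bounds on the kernel
  have hDbnd : ∀ θ : ℝ, (r - r₀) / (r + r₀) ≤ hD r α θ ∧ hD r α θ ≤ k := by
    intro θ
    have hpv := sq_bound α θ
    have hDpos := den_pos hA θ
    have hp1 : α.re * Real.cos θ + α.im * Real.sin θ ≤ r₀ := by
      nlinarith [sq_nonneg (vF α θ)]
    have hp2 : -r₀ ≤ α.re * Real.cos θ + α.im * Real.sin θ := by
      nlinarith [sq_nonneg (vF α θ)]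
    have hUdef : uF r α θ = r - (α.re * Real.cos θ + α.im * Real.sin θ) := rfl
    constructor
    · rw [hD, div_le_div_iff₀ hrr2 hDpos, hUdef]
      nlinarith [mul_nonneg (mul_nonneg hr.le hrr.le)
          (by linarith : (0:ℝ) ≤ r₀ + (α.re * Real.cos θ + α.im * Real.sin θ)),
        mul_nonneg hr.le (by linarith : (0:ℝ) ≤ r₀ ^ 2 - (α.re ^ 2 + α.im ^ 2)),
        sq_nonneg (vF α θ)]
    · rw [hD, hk, div_le_div_iff₀ hDpos hrr, hUdef]
      nlinarith [mul_nonneg (mul_nonneg hr.le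
          (by linarith : (0:ℝ) ≤ r - (α.re * Real.cos θ + α.im * Real.sin θ)))
          (by linarith : (0:ℝ) ≤ r₀ - (α.re * Real.cos θ + α.im * Real.sin θ)),
        mul_nonneg hr.le (sq_nonneg (vF α θ))]
  -- integral machinery
  have hFcont : Continuous (FF r g) := FF_continuous hr hg
  have hHder : ∀ x ∈ Set.uIcc (0:ℝ) (2 * Real.pi), HasDerivAt (hF r α) (hD r α x) x :=
    fun x _ => hF_hasDeriv hA x
  have hcov := intervalIntegral.integral_comp_smul_deriv hHder (hD_cont hA).continuousOn hFcont
  simp only [Function.comp, smul_eq_mul] at hcov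
  have hshift : (∫ u in (hF r α 0)..(hF r α (2 * Real.pi)), FF r g u)
      = ∫ θ in (0:ℝ)..(2 * Real.pi), FF r g θ := by
    rw [hF_two_pi]
    have h := (FF_periodic r g).intervalIntegral_add_eq (hF r α 0) 0
    simpa using h
  set Ig := ∫ θ in (0:ℝ)..(2 * Real.pi), FF r g θ with hIg
  set J := ∫ θ in (0:ℝ)..(2 * Real.pi), FF r g (hF r α θ) with hJ
  have hkey : (∫ θ in (0:ℝ)..(2 * Real.pi), hD r α θ * FF r g (hF r α θ)) = Ig := by
    rw [hcov, hshift]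
  have hHcont : Continuous (hF r α) :=
    continuous_iff_continuousAt.mpr fun x => (hF_hasDeriv hA x).continuousAt
  have hcomp : Continuous fun θ => FF r g (hF r α θ) := hFcont.comp hHcont
  have hprod : Continuous fun θ => hD r α θ * FF r g (hF r α θ) := (hD_cont hA).mul hcomp
  have h8 : k * ((r - r₀) / (r + r₀)) = 1 := by
    rw [hk]; field_simp
  -- J ≤ k * Ig
  have hJle : J ≤ k * Ig := by
    have h5 : J ≤ ∫ θ in (0:ℝ)..(2 * Real.pi), k * (hD r α θ * FF r g (hF r α θ)) := by
      apply intervalIntegral.integral_mono_on hπ.le (hcomp.intervalIntegrable _ _)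
        ((continuous_const.mul hprod).intervalIntegrable _ _)
      intro θ _
      calc FF r g (hF r α θ) = k * ((r - r₀) / (r + r₀) * FF r g (hF r α θ)) := by
            rw [← mul_assoc, h8, one_mul]
      _ ≤ k * (hD r α θ * FF r g (hF r α θ)) := by
            apply mul_le_mul_of_nonneg_left _ hkpos.le
            exact mul_le_mul_of_nonneg_right (hDbnd θ).1 (FF_nonneg r g _)
    rwa [intervalIntegral.integral_const_mul, hkey] at h5
  -- Ig ≤ k * J
  have hIgle : Ig ≤ k * J := by
    have h9 : (∫ θ in (0:ℝ)..(2 * Real.pi), hD r α θ * FF r g (hF r α θ))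
        ≤ ∫ θ in (0:ℝ)..(2 * Real.pi), k * FF r g (hF r α θ) := by
      apply intervalIntegral.integral_mono_on hπ.le (hprod.intervalIntegrable _ _)
        ((continuous_const.mul hcomp).intervalIntegrable _ _)
      intro θ _
      exact mul_le_mul_of_nonneg_right (hDbnd θ).2 (FF_nonneg r g _)
    rwa [hkey, intervalIntegral.integral_const_mul] at h9
  -- rewrite proxm
  have hproxg : proxm r g = (1 / (2 * Real.pi)) * Ig := rfl
  have hproxc : proxm r (g ∘ psiMap r α) = (1 / (2 * Real.pi)) * J := by
    rw [hJ]
    unfold proxm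
    congr 1
    apply intervalIntegral.integral_congr
    intro θ _
    show logPlus ‖(g ∘ psiMap r α) ((r : ℂ) * Complex.exp ((θ : ℂ) * Complex.I))‖
      = FF r g (hF r α θ)
    rw [Function.comp_apply, psi_eq hr hA θ]
    rfl
  have hc : (0:ℝ) ≤ 1 / (2 * Real.pi) := by positivity
  constructor
  · rw [hproxg, hproxc]
    have hJge : 1 / k * Ig ≤ J := by
      have h10 := mul_le_mul_of_nonneg_left hIgle (by positivity : (0:ℝ) ≤ 1 / k)
      calc 1 / k * Ig ≤ 1 / k * (k * J) := h10
      _ = J := by field_simp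
    calc 1 / k * (1 / (2 * Real.pi) * Ig) = 1 / (2 * Real.pi) * (1 / k * Ig) := by ring
    _ ≤ 1 / (2 * Real.pi) * J := mul_le_mul_of_nonneg_left hJge hc
  · rw [hproxg, hproxc]
    calc 1 / (2 * Real.pi) * J ≤ 1 / (2 * Real.pi) * (k * Ig) :=
          mul_le_mul_of_nonneg_left hJle hc
    _ = k * (1 / (2 * Real.pi) * Ig) := by ring
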